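/- Consider the network with links K = {a, b, c} whose interference graph G has exactly the edges {a,b} and {b,c}, and the fading structure π with π({a,b}) = π({b,c}) = π({a,b,c}) = 1/3 and π(J) = 0 for all other J ⊆ K. Then the standard (non-fading) local pooling factor of each of the induced subgraphs on {a,b}, on {b,c}, and on {a,b,c} equals 1, while σ*_G(π) ≤ 4/5 < 1 = Σ_{J⊆K} π(J)·σ*(G[J]). Hence the Fading-LPF is strictly smaller than the π-weighted average of the per-state local pooling factors. -/

import Mathlib

open scoped BigOperators
open Filter MeasureTheory ProbabilityTheory

/-- `S` is an independent set of the interference graph `G` contained in the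
set of links `J` (pairwise non-adjacent links). -/
def IsIndepIn {V : Type*} (G : SimpleGraph V) (J S : Finset V) : Prop :=
  S ⊆ J ∧ ∀ u ∈ S, ∀ v ∈ S, ¬ G.Adj u v

/-- `S` is a maximal independent set of `J`. -/
def IsMaxIndepIn {V : Type*} (G : SimpleGraph V) (J S : Finset V) : Prop :=
  IsIndepIn G J S ∧ ∀ T, IsIndepIn G J T → S ⊆ T → S = T

/-- 0/1 indicator vector of a finite set of links. -/
def indVec {V : Type*} [DecidableEq V] (S : Finset V) : V → ℝ :=
  fun v => if v ∈ S then 1 else 0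

/-- `M_{J,L}` : the (finite) set of 0/1 indicator vectors of the maximal independent
sets of `J`; the vectors are encoded in the ambient space `ℝ^V`, coordinates outside `J`
are automatically `0`. -/
def Mset {V : Type*} [DecidableEq V] (G : SimpleGraph V) (J : Finset V) : Set (V → ℝ) :=
  indVec '' {S | IsMaxIndepIn G J S}

/-- `CH(M_{J,L})` : the convex hull of `M_{J,L}`. -/
noncomputable def CHM {V : Type*} [DecidableEq V] (G : SimpleGraph V) (J : Finset V) :
    Set (V → ℝ) :=
  convexHull ℝ (Mset G J)

/-- A fading structure `π` on the set of links: nonnegative weights summing to one. -/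
def IsFading {V : Type*} [Fintype V] [DecidableEq V] (π : Finset V → ℝ) : Prop :=
  (∀ J, 0 ≤ π J) ∧ ∑ J : Finset V, π J = 1

/-- `Φ(L) = { Σ_{J ⊆ K} π(J) η_J : η_J ∈ CH(M_{J∩L,L}) }`. -/
def Phi {V : Type*} [Fintype V] [DecidableEq V] (G : SimpleGraph V) (π : Finset V → ℝ)
    (L : Finset V) : Set (V → ℝ) :=
  {φ | ∃ η : Finset V → V → ℝ, (∀ J, η J ∈ CHM G (J ∩ L)) ∧
    φ = ∑ J : Finset V, π J • η J}

/-- The fading local pooling factor `σ*_L(π)` of a set of links `L`. -/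
noncomputable def sigmaL {V : Type*} [Fintype V] [DecidableEq V] (G : SimpleGraph V)
    (π : Finset V → ℝ) (L : Finset V) : ℝ :=
  sInf {σ : ℝ | 0 ≤ σ ∧ ∃ φ1 ∈ Phi G π L, ∃ φ2 ∈ Phi G π L, ∀ v ∈ L, φ2 v ≤ σ * φ1 v}

/-- The Fading-LPF `σ*_G(π)` of the network: minimum of `σ*_L(π)` over nonempty `L ⊆ K`. -/
noncomputable def sigmaG {V : Type*} [Fintype V] [DecidableEq V] (G : SimpleGraph V)
    (π : Finset V → ℝ) : ℝ :=
  sInf (sigmaL G π '' {L : Finset V | L.Nonempty})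
/-- The marginal distribution `π_L` induced on a subset of links `L`. -/
noncomputable def marginal {V : Type*} [Fintype V] [DecidableEq V] (π : Finset V → ℝ)
    (L J : Finset V) : ℝ :=
  ∑ I : Finset V, if I ∩ L = J then π I else 0

/-- `n(M_J)`: minimum cardinality of a maximal independent set of `J`. -/
noncomputable def nM {V : Type*} (G : SimpleGraph V) (J : Finset V) : ℕ :=
  sInf (Finset.card '' {S | IsMaxIndepIn G J S})

/-- `N(M_J)`: maximum cardinality of a maximal independent set of `J`. -/
noncomputable def NM {V : Type*} (G : SimpleGraph V) (J : Finset V) : ℕ :=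
  sSup (Finset.card '' {S | IsMaxIndepIn G J S})

/-- interference degree of a link `l`: maximum cardinality of an independent set of `G`
contained in the closed neighborhood of `l`. -/
noncomputable def dI {V : Type*} (G : SimpleGraph V) (l : V) : ℕ :=
  sSup (Finset.card '' {S : Finset V | (∀ u ∈ S, ∀ v ∈ S, ¬ G.Adj u v) ∧
    ∀ v ∈ S, v = l ∨ G.Adj l v})

/-- interference degree `d_I(G)` of the whole interference graph. -/
noncomputable def dIG {V : Type*} (G : SimpleGraph V) : ℕ :=
  sSup (Set.range (dI G))

/-- interference degree `d_I(S)` of the subgraph of `G` induced on the set of links `S`. -/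
noncomputable def dISet {V : Type*} (G : SimpleGraph V) (Sset : Finset V) : ℕ :=
  sSup (Finset.card '' {T : Finset V | T ⊆ Sset ∧ (∀ u ∈ T, ∀ v ∈ T, ¬ G.Adj u v) ∧
    ∃ l ∈ Sset, ∀ v ∈ T, v = l ∨ G.Adj l v})

/-- The throughput region `Λ_f`. -/
def LambdaF {V : Type*} [Fintype V] [DecidableEq V] (G : SimpleGraph V) (π : Finset V → ℝ) :
    Set (V → ℝ) :=
  {lam | (∀ v, 0 < lam v) ∧ ∃ η : Finset V → V → ℝ,
    (∀ J, η J ∈ CHM G J) ∧ ∀ v, lam v ≤ ∑ J : Finset V, π J * η J v}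

/-- The scaled region `Λ_f(x)`. -/
def LambdaX {V : Type*} [Fintype V] [DecidableEq V] (G : SimpleGraph V) (π : Finset V → ℝ)
    (x : Finset V → ℝ) : Set (V → ℝ) :=
  {lam | (∀ v, 0 < lam v) ∧ ∃ η : Finset V → V → ℝ,
    (∀ J, η J ∈ CHM G J) ∧ ∀ v, lam v ≤ ∑ J : Finset V, x J * π J * η J v}

/-- The standard (non-fading) local pooling factor of a graph `H`. -/
noncomputable def stdLPF (W : Type*) [Fintype W] [DecidableEq W] (H : SimpleGraph W) : ℝ :=
  sInf ((fun L => sInf {σ : ℝ | 0 ≤ σ ∧ ∃ φ1 ∈ CHM H L, ∃ φ2 ∈ CHM H L,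
    ∀ v ∈ L, φ2 v ≤ σ * φ1 v}) '' {L : Finset W | L.Nonempty})

/-- discrete measurable structure on global channel states -/
instance {α : Type*} : MeasurableSpace (Finset α) := ⊤

/-- The queue-length process `Q` evolves according to
`Q_l[t+1] = (Q_l[t] − C_l[t]·1{l ∈ S[t]})⁺ + A_l[t]`, `Q_l[0] = 0`,
where `GS t ω` is the set of 'ON' links and `S t ω` is the schedule. -/
def QueueEvol {V : Type*} [DecidableEq V] {Ω : Type*} (A : ℕ → V → Ω → ℕ)
    (GS S : ℕ → Ω → Finset V) (Q : ℕ → V → Ω → ℕ) : Prop :=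
  (∀ l ω, Q 0 l ω = 0) ∧
  ∀ t l ω, Q (t + 1) l ω =
    (Q t l ω - (if l ∈ GS t ω ∧ l ∈ S t ω then 1 else 0)) + A t l ω

/-- `S` is a greedy maximal schedule for the weights `w`: a maximal independent set of `G`
with an enumeration `s_0, …, s_{k-1}` such that each `s_i` has maximal weight among the
links neither equal nor adjacent to any of `s_0, …, s_{i-1}`. -/
def IsGreedySchedule {V : Type*} [Fintype V] [DecidableEq V] (G : SimpleGraph V)
    (w : V → ℝ) (S : Finset V) : Prop :=
  IsMaxIndepIn G Finset.univ S ∧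
  ∃ s : ℕ → V, S = (Finset.range S.card).image s ∧
    (∀ i < S.card, ∀ j < S.card, s i = s j → i = j) ∧
    ∀ i < S.card, ∀ v : V, (∀ j < i, v ≠ s j ∧ ¬ G.Adj v (s j)) → w v ≤ w (s i)

/-- A GMS policy: at every time and in every sample point, the schedule is a greedy
maximal schedule for the weights `w_l = Q_l[t]·C_l[t]`. -/
def IsGMSPolicy {V : Type*} [Fintype V] [DecidableEq V] {Ω : Type*} (G : SimpleGraph V)
    (GS S : ℕ → Ω → Finset V) (Q : ℕ → V → Ω → ℕ) : Prop :=
  ∀ t ω, IsGreedySchedule G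
    (fun l => (Q t l ω : ℝ) * (if l ∈ GS t ω then 1 else 0)) (S t ω)

/-- The 3-link path network `a - b - c` (links `0,1,2`, edges `{0,1}` and `{1,2}`). -/
def Gpath : SimpleGraph (Fin 3) :=
  SimpleGraph.fromRel (fun u v => (u = 0 ∧ v = 1) ∨ (u = 1 ∧ v = 2))

/-- The fading structure of Example B: `π({a,b}) = π({b,c}) = π({a,b,c}) = 1/3`. -/
noncomputable def piPath : Finset (Fin 3) → ℝ := fun J =>
  if J = {0, 1} ∨ J = {1, 2} ∨ J = {0, 1, 2} then 1 / 3 else 0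


/- ------------------- auxiliary lemmas ------------------- -/

instance : DecidableRel Gpath.Adj := fun u v =>
  inferInstanceAs (Decidable (u ≠ v ∧ (((u = 0 ∧ v = 1) ∨ (u = 1 ∧ v = 2)) ∨ ((v = 0 ∧ u = 1) ∨ (v = 1 ∧ u = 2)))))

instance instDecInduceAdj {V : Type*} {G : SimpleGraph V} [h : DecidableRel G.Adj] {s : Set V} :
    DecidableRel (G.induce s).Adj := fun u v => h u.val v.val

instance instDecIndep {V : Type*} [DecidableEq V] (G : SimpleGraph V) [DecidableRel G.Adj]
    (J S : Finset V) : Decidable (IsIndepIn G J S) :=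
  inferInstanceAs (Decidable (S ⊆ J ∧ ∀ u ∈ S, ∀ v ∈ S, ¬ G.Adj u v))

instance instDecMax {V : Type*} [Fintype V] [DecidableEq V] (G : SimpleGraph V) [DecidableRel G.Adj]
    (J S : Finset V) : Decidable (IsMaxIndepIn G J S) :=
  inferInstanceAs (Decidable (IsIndepIn G J S ∧ ∀ T, IsIndepIn G J T → S ⊆ T → S = T))

lemma exists_maxIndep {V : Type*} [Fintype V] (G : SimpleGraph V) (J : Finset V) :
    ∃ S, IsMaxIndepIn G J S := by
  classical
  have hfin : ({S : Finset V | IsIndepIn G J S}).Finite := Set.toFinite _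
  have hne : ({S : Finset V | IsIndepIn G J S}).Nonempty := ⟨∅, by constructor <;> simp⟩
  obtain ⟨S, hS, hmax⟩ := Set.Finite.exists_maximalFor Finset.card _ hfin hne
  refine ⟨S, hS, fun T hT hST => ?_⟩
  exact Finset.eq_of_subset_of_card_le hST
    (hmax hT (Finset.card_le_card hST))

lemma sum_const_on_CHM {V : Type*} [Fintype V] [DecidableEq V] (G : SimpleGraph V)
    (L : Finset V) (α : V → ℝ) (c : ℝ)
    (h : ∀ S, IsMaxIndepIn G L S → ∑ v ∈ L, α v * indVec S v = c) :
    ∀ φ ∈ CHM G L, ∑ v ∈ L, α v * φ v = c := by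
  intro φ hφ
  have hconv : Convex ℝ {x : V → ℝ | ∑ v ∈ L, α v * x v = c} := by
    intro x hx y hy a b ha hb hab
    simp only [Set.mem_setOf_eq] at hx hy ⊢
    have : ∀ v ∈ L, α v * (a • x + b • y) v = a * (α v * x v) + b * (α v * y v) := by
      intro v _; simp [Pi.add_apply, Pi.smul_apply, smul_eq_mul]; ring
    rw [Finset.sum_congr rfl this, Finset.sum_add_distrib, ← Finset.mul_sum, ← Finset.mul_sum,
      hx, hy, ← add_mul, hab, one_mul]
  have hsub : Mset G L ⊆ {x : V → ℝ | ∑ v ∈ L, α v * x v = c} := by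
    rintro _ ⟨S, hS, rfl⟩; exact h S hS
  exact convexHull_min hsub hconv hφ

lemma stdLPF_eq_one {W : Type*} [Fintype W] [DecidableEq W] [Nonempty W]
    (H : SimpleGraph W) (αn : Finset W → W → ℕ)
    (hconst : ∀ L S S' : Finset W, IsMaxIndepIn H L S → IsMaxIndepIn H L S' →
        ∑ v ∈ S, αn L v = ∑ v ∈ S', αn L v)
    (hpos : ∀ L : Finset W, L.Nonempty → ∀ S, IsMaxIndepIn H L S → 0 < ∑ v ∈ S, αn L v) :
    stdLPF W H = 1 := by
  classical
  set g : Finset W → ℝ := fun L => sInf {σ : ℝ | 0 ≤ σ ∧ ∃ φ1 ∈ CHM H L, ∃ φ2 ∈ CHM H L,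
    ∀ v ∈ L, φ2 v ≤ σ * φ1 v} with hg
  have key : ∀ L : Finset W, L.Nonempty → g L = 1 := by
    intro L hLne
    obtain ⟨S0, hS0⟩ := exists_maxIndep H L
    have hS0m : indVec S0 ∈ CHM H L := subset_convexHull ℝ _ ⟨S0, hS0, rfl⟩
    have hmem : (1 : ℝ) ∈ {σ : ℝ | 0 ≤ σ ∧ ∃ φ1 ∈ CHM H L, ∃ φ2 ∈ CHM H L,
        ∀ v ∈ L, φ2 v ≤ σ * φ1 v} :=
      ⟨zero_le_one, indVec S0, hS0m, indVec S0, hS0m, fun v _ => by rw [one_mul]⟩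
    set c : ℝ := ((∑ v ∈ S0, αn L v : ℕ) : ℝ) with hc
    have hcpos : 0 < c := by rw [hc]; exact_mod_cast hpos L hLne S0 hS0
    have hsum : ∀ S, IsMaxIndepIn H L S → ∑ v ∈ L, (αn L v : ℝ) * indVec S v = c := by
      intro S hS
      have hsub : S ⊆ L := hS.1.1
      have : ∑ v ∈ L, (αn L v : ℝ) * indVec S v = ((∑ v ∈ S, αn L v : ℕ) : ℝ) := by
        push_cast
        simp only [indVec, mul_ite, mul_one, mul_zero]
        rw [Finset.sum_ite_mem, Finset.inter_eq_right.mpr hsub]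
      rw [this, hc]
      exact_mod_cast hconst L S S0 hS hS0
    have hCHM := sum_const_on_CHM H L (fun v => (αn L v : ℝ)) c hsum
    have hlb : ∀ σ ∈ {σ : ℝ | 0 ≤ σ ∧ ∃ φ1 ∈ CHM H L, ∃ φ2 ∈ CHM H L,
        ∀ v ∈ L, φ2 v ≤ σ * φ1 v}, (1:ℝ) ≤ σ := by
      rintro σ ⟨hσ0, φ1, h1, φ2, h2, hle⟩
      have e1 := hCHM φ1 h1
      have e2 := hCHM φ2 h2
      have : c ≤ σ * c := by
        calc c = ∑ v ∈ L, (αn L v : ℝ) * φ2 v := (e2).symm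
        _ ≤ ∑ v ∈ L, (αn L v : ℝ) * (σ * φ1 v) := by
            refine Finset.sum_le_sum fun v hv => ?_
            exact mul_le_mul_of_nonneg_left (hle v hv) (by positivity)
        _ = σ * ∑ v ∈ L, (αn L v : ℝ) * φ1 v := by
            rw [Finset.mul_sum]; exact Finset.sum_congr rfl fun v _ => by ring
        _ = σ * c := by rw [e1]
      nlinarith
    exact le_antisymm (csInf_le ⟨1, hlb⟩ hmem) (le_csInf ⟨1, hmem⟩ hlb)
  have himg : g '' {L : Finset W | L.Nonempty} = {1} := by
    apply Set.eq_singleton_iff_unique_mem.mpr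
    constructor
    · exact ⟨Finset.univ, Finset.univ_nonempty, key _ Finset.univ_nonempty⟩
    · rintro x ⟨L, hL, rfl⟩; exact key L hL
  rw [stdLPF, himg, csInf_singleton]

lemma sum_piPath (g : Finset (Fin 3) → ℝ) :
    ∑ J : Finset (Fin 3), piPath J * g J =
      (1/3) * g {0,1} + (1/3) * g {1,2} + (1/3) * g {0,1,2} := by
  have h : ∀ J : Finset (Fin 3), piPath J * g J =
      (if J = ({0,1} : Finset (Fin 3)) then (1/3) * g J else 0) +
      ((if J = ({1,2} : Finset (Fin 3)) then (1/3) * g J else 0) +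
      (if J = ({0,1,2} : Finset (Fin 3)) then (1/3) * g J else 0)) := by
    intro J
    by_cases h1 : J = ({0,1} : Finset (Fin 3))
    · subst h1; rw [if_pos rfl, if_neg (by decide), if_neg (by decide)]
      simp [piPath]
    by_cases h2 : J = ({1,2} : Finset (Fin 3))
    · subst h2; rw [if_neg (by decide), if_pos rfl, if_neg (by decide)]
      simp [piPath]
    by_cases h3 : J = ({0,1,2} : Finset (Fin 3))
    · subst h3; rw [if_neg (by decide), if_neg (by decide), if_pos rfl]
      simp [piPath]
    · rw [if_neg h1, if_neg h2, if_neg h3]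
      simp [piPath, h1, h2, h3]
  rw [Finset.sum_congr rfl (fun J _ => h J), Finset.sum_add_distrib, Finset.sum_add_distrib,
    Finset.sum_ite_eq' Finset.univ ({0,1} : Finset (Fin 3)),
    Finset.sum_ite_eq' Finset.univ ({1,2} : Finset (Fin 3)),
    Finset.sum_ite_eq' Finset.univ ({0,1,2} : Finset (Fin 3))]
  simp [add_assoc]

noncomputable def etaDef (J : Finset (Fin 3)) : Fin 3 → ℝ :=
  indVec (exists_maxIndep Gpath J).choose

lemma etaDef_mem (J : Finset (Fin 3)) : etaDef J ∈ CHM Gpath J :=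
  subset_convexHull ℝ _ ⟨_, (exists_maxIndep Gpath J).choose_spec, rfl⟩

noncomputable def eta1 : Finset (Fin 3) → Fin 3 → ℝ := fun J =>
  if J = ({0,1} : Finset (Fin 3)) then indVec {1}
  else if J = ({1,2} : Finset (Fin 3)) then indVec {1}
  else if J = ({0,1,2} : Finset (Fin 3)) then indVec {0,2}
  else etaDef J

noncomputable def eta2 : Finset (Fin 3) → Fin 3 → ℝ := fun J =>
  if J = ({0,1} : Finset (Fin 3)) then (4/5 : ℝ) • indVec {0} + (1/5 : ℝ) • indVec ({1} : Finset (Fin 3))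
  else if J = ({1,2} : Finset (Fin 3)) then (4/5 : ℝ) • indVec {2} + (1/5 : ℝ) • indVec ({1} : Finset (Fin 3))
  else if J = ({0,1,2} : Finset (Fin 3)) then indVec {1}
  else etaDef J

lemma mem_CHM_of_max {J S : Finset (Fin 3)} (h : IsMaxIndepIn Gpath J S) :
    indVec S ∈ CHM Gpath J :=
  subset_convexHull ℝ _ ⟨S, h, rfl⟩

lemma combo_mem {J S T : Finset (Fin 3)} (hS : IsMaxIndepIn Gpath J S)
    (hT : IsMaxIndepIn Gpath J T) {a b : ℝ} (ha : 0 ≤ a) (hb : 0 ≤ b) (hab : a + b = 1) :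
    a • indVec S + b • indVec T ∈ CHM Gpath J :=
  (convex_convexHull ℝ _) (mem_CHM_of_max hS) (mem_CHM_of_max hT) ha hb hab

lemma eta1_mem : ∀ J, eta1 J ∈ CHM Gpath (J ∩ {0,1,2}) := by
  intro J
  have hJ : J ∩ ({0,1,2} : Finset (Fin 3)) = J := by
    rw [show ({0,1,2} : Finset (Fin 3)) = Finset.univ from by decide, Finset.inter_univ]
  rw [hJ]
  unfold eta1
  by_cases h1 : J = ({0,1} : Finset (Fin 3))
  · subst h1; rw [if_pos rfl]; exact mem_CHM_of_max (by decide)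
  rw [if_neg h1]
  by_cases h2 : J = ({1,2} : Finset (Fin 3))
  · subst h2; rw [if_pos rfl]; exact mem_CHM_of_max (by decide)
  rw [if_neg h2]
  by_cases h3 : J = ({0,1,2} : Finset (Fin 3))
  · subst h3; rw [if_pos rfl]; exact mem_CHM_of_max (by decide)
  rw [if_neg h3]; exact etaDef_mem J

lemma eta2_mem : ∀ J, eta2 J ∈ CHM Gpath (J ∩ {0,1,2}) := by
  intro J
  have hJ : J ∩ ({0,1,2} : Finset (Fin 3)) = J := by
    rw [show ({0,1,2} : Finset (Fin 3)) = Finset.univ from by decide, Finset.inter_univ]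
  rw [hJ]
  unfold eta2
  by_cases h1 : J = ({0,1} : Finset (Fin 3))
  · subst h1; rw [if_pos rfl]
    exact combo_mem (by decide) (by decide) (by norm_num) (by norm_num) (by norm_num)
  rw [if_neg h1]
  by_cases h2 : J = ({1,2} : Finset (Fin 3))
  · subst h2; rw [if_pos rfl]
    exact combo_mem (by decide) (by decide) (by norm_num) (by norm_num) (by norm_num)
  rw [if_neg h2]
  by_cases h3 : J = ({0,1,2} : Finset (Fin 3))
  · subst h3; rw [if_pos rfl]; exact mem_CHM_of_max (by decide)
  rw [if_neg h3]; exact etaDef_mem J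

lemma sigmaG_le_four_fifths : sigmaG Gpath piPath ≤ 4/5 := by
  have hL : sigmaL Gpath piPath {0,1,2} ≤ 4/5 := by
    have hmem : (4/5 : ℝ) ∈ {σ : ℝ | 0 ≤ σ ∧ ∃ φ1 ∈ Phi Gpath piPath {0,1,2},
        ∃ φ2 ∈ Phi Gpath piPath {0,1,2}, ∀ v ∈ ({0,1,2} : Finset (Fin 3)), φ2 v ≤ σ * φ1 v} := by
      refine ⟨by norm_num, ∑ J : Finset (Fin 3), piPath J • eta1 J, ⟨eta1, eta1_mem, rfl⟩,
        ∑ J : Finset (Fin 3), piPath J • eta2 J, ⟨eta2, eta2_mem, rfl⟩, ?_⟩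
      intro v hv
      have hsum : ∀ (η : Finset (Fin 3) → Fin 3 → ℝ),
          (∑ J : Finset (Fin 3), piPath J • η J) v =
          (1/3) * η {0,1} v + (1/3) * η {1,2} v + (1/3) * η {0,1,2} v := by
        intro η
        rw [Finset.sum_apply]
        simp only [Pi.smul_apply, smul_eq_mul]
        exact sum_piPath (fun J => η J v)
      rw [hsum eta1, hsum eta2]
      have e1A : eta1 ({0,1} : Finset (Fin 3)) = indVec {1} := by unfold eta1; rw [if_pos rfl]
      have e1B : eta1 ({1,2} : Finset (Fin 3)) = indVec {1} := by
        unfold eta1; rw [if_neg (by decide), if_pos rfl]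
      have e1C : eta1 ({0,1,2} : Finset (Fin 3)) = indVec {0,2} := by
        unfold eta1; rw [if_neg (by decide), if_neg (by decide), if_pos rfl]
      have e2A : eta2 ({0,1} : Finset (Fin 3)) =
          (4/5 : ℝ) • indVec {0} + (1/5 : ℝ) • indVec ({1} : Finset (Fin 3)) := by
        unfold eta2; rw [if_pos rfl]
      have e2B : eta2 ({1,2} : Finset (Fin 3)) =
          (4/5 : ℝ) • indVec {2} + (1/5 : ℝ) • indVec ({1} : Finset (Fin 3)) := by
        unfold eta2; rw [if_neg (by decide), if_pos rfl]
      have e2C : eta2 ({0,1,2} : Finset (Fin 3)) = indVec {1} := by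
        unfold eta2; rw [if_neg (by decide), if_neg (by decide), if_pos rfl]
      rw [e1A, e1B, e1C, e2A, e2B, e2C]
      fin_cases hv <;> simp [indVec, Fin.ext_iff] <;> norm_num
    have hbdd : BddBelow {σ : ℝ | 0 ≤ σ ∧ ∃ φ1 ∈ Phi Gpath piPath {0,1,2},
        ∃ φ2 ∈ Phi Gpath piPath {0,1,2}, ∀ v ∈ ({0,1,2} : Finset (Fin 3)), φ2 v ≤ σ * φ1 v} :=
      ⟨0, fun σ hσ => hσ.1⟩
    exact csInf_le hbdd hmem
  have hbdd : BddBelow (sigmaL Gpath piPath '' {L : Finset (Fin 3) | L.Nonempty}) := by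
    refine ⟨0, ?_⟩
    rintro _ ⟨L, _, rfl⟩
    exact Real.sInf_nonneg (fun σ hσ => hσ.1)
  calc sigmaG Gpath piPath ≤ sigmaL Gpath piPath {0,1,2} :=
        csInf_le hbdd ⟨{0,1,2}, by decide, rfl⟩
    _ ≤ 4/5 := hL

lemma stdLPF_01 : stdLPF _ (SimpleGraph.induce (↑({0, 1} : Finset (Fin 3))) Gpath) = 1 := by
  haveI : Nonempty ↥(↑({0, 1} : Finset (Fin 3)) : Set (Fin 3)) := ⟨⟨0, by simp⟩⟩
  exact stdLPF_eq_one _ (fun L v => if v ∈ L then 1 else 0) (by decide) (by decide)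

lemma stdLPF_12 : stdLPF _ (SimpleGraph.induce (↑({1, 2} : Finset (Fin 3))) Gpath) = 1 := by
  haveI : Nonempty ↥(↑({1, 2} : Finset (Fin 3)) : Set (Fin 3)) := ⟨⟨1, by simp⟩⟩
  exact stdLPF_eq_one _ (fun L v => if v ∈ L then 1 else 0) (by decide) (by decide)

lemma stdLPF_012 : stdLPF _ (SimpleGraph.induce (↑({0, 1, 2} : Finset (Fin 3))) Gpath) = 1 := by
  haveI : Nonempty ↥(↑({0, 1, 2} : Finset (Fin 3)) : Set (Fin 3)) := ⟨⟨0, by simp⟩⟩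
  exact stdLPF_eq_one _
    (fun L v => (if v ∈ L then 1 else 0) + (if L = Finset.univ ∧ (v : Fin 3) = 1 then 1 else 0))
    (by decide) (by decide)

/-- **Averaging fails.** Each fading state of Example B induces a subgraph with standard
local pooling factor `1`, yet `σ*_G(π) ≤ 4/5 < 1 = Σ_J π(J)·σ*(G[J])`: the Fading-LPF is
strictly smaller than the `π`-weighted average of the per-state local pooling factors. -/
theorem example_B_averaging_fails :
    stdLPF _ (SimpleGraph.induce (↑({0, 1} : Finset (Fin 3))) Gpath) = 1 ∧
    stdLPF _ (SimpleGraph.induce (↑({1, 2} : Finset (Fin 3))) Gpath) = 1 ∧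
    stdLPF _ (SimpleGraph.induce (↑({0, 1, 2} : Finset (Fin 3))) Gpath) = 1 ∧
    sigmaG Gpath piPath ≤ 4 / 5 ∧
    (∑ J : Finset (Fin 3), piPath J * stdLPF _ (SimpleGraph.induce (↑J) Gpath)) = 1 ∧
    sigmaG Gpath piPath < ∑ J : Finset (Fin 3), piPath J * stdLPF _ (SimpleGraph.induce (↑J) Gpath) := by
  have h5 : (∑ J : Finset (Fin 3), piPath J * stdLPF _ (SimpleGraph.induce (↑J) Gpath)) = 1 := by
    rw [sum_piPath (fun J => stdLPF _ (SimpleGraph.induce (↑J) Gpath)),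
      stdLPF_01, stdLPF_12, stdLPF_012]
    norm_num
  refine ⟨stdLPF_01, stdLPF_12, stdLPF_012, sigmaG_le_four_fifths, h5, ?_⟩
  rw [h5]
  exact lt_of_le_of_lt sigmaG_le_four_fifths (by norm_num)
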